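/- Let A ∈ Z^{n×d} be an integer matrix of rank r > k with entries bounded in magnitude by M, and let λ_1 ≥ ... ≥ λ_d be the eigenvalues of A^T A. Then λ_{k+1} ≥ (n·d·M^2)^{-k/(r-k)}. -/

import Mathlib

open Matrix Polynomial

lemma aux_charpoly_conj {d : ℕ} (D U : Matrix (Fin d) (Fin d) ℝ)
    (hUU : Uᵀ * U = 1) : (Uᵀ * D * U).charpoly = D.charpoly := by
  set V : Matrix (Fin d) (Fin d) ℝ[X] := (C : ℝ →+* ℝ[X]).mapMatrix U with hV
  have hVt : Vᵀ = (C : ℝ →+* ℝ[X]).mapMatrix Uᵀ := by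
    simp [hV, RingHom.mapMatrix_apply, Matrix.transpose_map]
  have hVV : Vᵀ * V = 1 := by
    rw [hVt, hV, ← _root_.map_mul, hUU, _root_.map_one]
  have key : charmatrix (Uᵀ * D * U) = Vᵀ * charmatrix D * V := by
    rw [charmatrix, charmatrix, Matrix.mul_sub, Matrix.sub_mul]
    congr 1
    · have hcomm : Vᵀ * scalar (Fin d) X = scalar (Fin d) X * Vᵀ := by
        ext i j; simp [scalar_apply, mul_diagonal, diagonal_mul, mul_comm]
      rw [hcomm, mul_assoc, hVV, mul_one]
    · rw [_root_.map_mul, _root_.map_mul, hVt]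
  have hdetV : det Vᵀ * det V = 1 := by rw [← det_mul, hVV, det_one]
  rw [Matrix.charpoly, Matrix.charpoly, key]
  calc det (Vᵀ * charmatrix D * V) = det (charmatrix D) * (det Vᵀ * det V) := by
        rw [det_mul, det_mul]; ring
    _ = det (charmatrix D) := by rw [hdetV, mul_one]

lemma aux_charpoly_diagonal {d : ℕ} (lam : Fin d → ℝ) :
    (Matrix.diagonal lam).charpoly = ∏ i, (X - C (lam i)) := by
  have h : charmatrix (Matrix.diagonal lam)
      = Matrix.diagonal (fun i => (X : ℝ[X]) - C (lam i)) := by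
    ext i j
    by_cases hij : i = j
    · subst hij; simp
    · simp [charmatrix_apply_ne _ _ _ hij, Matrix.diagonal_apply_ne _ hij]
  rw [Matrix.charpoly, h, det_diagonal]


/-- Let `A ∈ ℤ^{n×d}` be an integer matrix of rank `r > k` with entries bounded in
magnitude by `M`, and let `λ₁ ≥ ... ≥ λ_d` be the eigenvalues of `AᵀA` (given via a
diagonalization with orthogonal `U`). Then `λ_{k+1} ≥ (n·d·M²)^{-k/(r-k)}`.
(0-indexed, `λ_{k+1}` is `lam ⟨k, _⟩`.) -/
theorem stmt8 {n d k r : ℕ} (M : ℕ) (hkd : k < d) (hrk : k < r)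
    (A : Matrix (Fin n) (Fin d) ℤ)
    (hM : ∀ i j, |A i j| ≤ (M : ℤ))
    (hrank : (A.map (fun x : ℤ => (x : ℝ))).rank = r)
    (lam : Fin d → ℝ) (U : Matrix (Fin d) (Fin d) ℝ)
    (hmono : Antitone lam) (hnonneg : ∀ i, 0 ≤ lam i)
    (hU : U * Uᵀ = 1)
    (hdiag : (A.map (fun x : ℤ => (x : ℝ)))ᵀ * A.map (fun x : ℤ => (x : ℝ)) =
      Uᵀ * Matrix.diagonal lam * U) :
    ((n : ℝ) * (d : ℝ) * (M : ℝ) ^ 2) ^ (-(k : ℝ) / ((r : ℝ) - (k : ℝ))) ≤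
      lam ⟨k, hkd⟩ := by
  set B := A.map (fun x : ℤ => (x : ℝ)) with hB
  set T : ℝ := (n : ℝ) * (d : ℝ) * (M : ℝ) ^ 2 with hT
  have hUU : Uᵀ * U = 1 := mul_eq_one_comm.mp hU
  have hdetU : IsUnit U.det := by
    have h1 : U.det * Uᵀ.det = 1 := by rw [← det_mul, hU, det_one]
    exact IsUnit.of_mul_eq_one _ h1
  have hdetUt : IsUnit Uᵀ.det := by rwa [det_transpose]
  -- rank of diagonal = r
  have hrdiag : (Matrix.diagonal lam).rank = r := by
    have h1 : (Uᵀ * Matrix.diagonal lam * U).rank = (Matrix.diagonal lam).rank := by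
      rw [rank_mul_eq_left_of_isUnit_det _ _ hdetU,
        rank_mul_eq_right_of_isUnit_det _ _ hdetUt]
    rw [← h1, ← hdiag, rank_transpose_mul_self, hrank]
  have hcard : (Finset.univ.filter fun i : Fin d => lam i ≠ 0).card = r := by
    have := Matrix.rank_diagonal lam
    rw [hrdiag] at this
    rw [this, Fintype.card_subtype]
  -- support characterization
  have hsupp : ∀ i : Fin d, lam i ≠ 0 ↔ (i : ℕ) < r := by
    intro i
    constructor
    · intro hne
      have hIic : Finset.Iic i ⊆ Finset.univ.filter fun j => lam j ≠ 0 := by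
        intro j hj
        simp only [Finset.mem_Iic] at hj
        simp only [Finset.mem_filter, Finset.mem_univ, true_and]
        have h0 : 0 < lam i := lt_of_le_of_ne (hnonneg i) (Ne.symm hne)
        exact ne_of_gt (lt_of_lt_of_le h0 (hmono hj))
      have hc := Finset.card_le_card hIic
      rw [hcard, Fin.card_Iic] at hc
      omega
    · intro hir
      by_contra hne
      have hsub : (Finset.univ.filter fun j : Fin d => lam j ≠ 0) ⊆ Finset.Iio i := by
        intro j hj
        simp only [Finset.mem_filter, Finset.mem_univ, true_and] at hj
        simp only [Finset.mem_Iio]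
        by_contra hji
        push_neg at hji
        exact hj (le_antisymm (hne ▸ hmono hji) (hnonneg j))
      have hc := Finset.card_le_card hsub
      rw [hcard, Fin.card_Iio] at hc
      omega
  have hpos : ∀ i : Fin d, (i : ℕ) < r → 0 < lam i := fun i hi =>
    lt_of_le_of_ne (hnonneg i) (Ne.symm ((hsupp i).mpr hi))
  have hzero : ∀ i : Fin d, r ≤ (i : ℕ) → lam i = 0 := fun i hi => by
    by_contra h; exact absurd ((hsupp i).mp h) (not_lt.mpr hi)
  -- trace bound
  have htrace : ∑ i, lam i = Matrix.trace (Bᵀ * B) := by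
    rw [hdiag, Matrix.trace_mul_cycle, hU, Matrix.one_mul, Matrix.trace_diagonal]
  have hentry : ∀ (i : Fin n) (j : Fin d), (B i j) ^ 2 ≤ (M : ℝ) ^ 2 := by
    intro i j
    have h1 : |B i j| ≤ (M : ℝ) := by
      rw [hB]; simp only [Matrix.map_apply]
      exact_mod_cast hM i j
    calc (B i j) ^ 2 = |B i j| ^ 2 := (sq_abs _).symm
      _ ≤ (M : ℝ) ^ 2 := pow_le_pow_left₀ (abs_nonneg _) h1 2
  have htr_le : Matrix.trace (Bᵀ * B) ≤ T := by
    calc Matrix.trace (Bᵀ * B) = ∑ j, ∑ i, (B i j) ^ 2 := by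
          simp [Matrix.trace, Matrix.diag, Matrix.mul_apply, sq]
      _ ≤ ∑ _j : Fin d, ∑ _i : Fin n, (M : ℝ) ^ 2 := by
          apply Finset.sum_le_sum; intro j _
          apply Finset.sum_le_sum; intro i _
          exact hentry i j
      _ = T := by simp [hT]; ring
  have hTr : ∀ i, lam i ≤ T :=
    fun i => le_trans (Finset.single_le_sum (fun j _ => hnonneg j) (Finset.mem_univ i))
      (htrace ▸ htr_le)
  -- the filter set
  set s : Finset (Fin d) := Finset.univ.filter (fun i : Fin d => (i : ℕ) < r) with hs
  have hseq : s = Finset.univ.filter fun i : Fin d => lam i ≠ 0 := by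
    rw [hs]; ext i; simp [hsupp i]
  have hscard : s.card = r := by rw [hseq, hcard]
  -- charpoly computation
  have hmapmul : (Aᵀ * A).map (Int.castRingHom ℝ) = Bᵀ * B := by
    ext i j
    simp [Matrix.mul_apply, Matrix.map_apply, hB]
  have hcp : ((Aᵀ * A).charpoly).map (Int.castRingHom ℝ) = ∏ i, (X - C (lam i)) := by
    rw [← Matrix.charpoly_map, hmapmul, hdiag, aux_charpoly_conj _ _ hUU,
      aux_charpoly_diagonal]
  have hcardnot : (Finset.univ.filter fun i : Fin d => ¬ (i : ℕ) < r).card = d - r := by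
    have h1 := Finset.card_filter_add_card_filter_not
      (s := (Finset.univ : Finset (Fin d))) (p := fun i : Fin d => (i : ℕ) < r)
    rw [Finset.card_univ, Fintype.card_fin, ← hs, hscard] at h1
    omega
  have hsplitprod : (∏ i, (X - C (lam i)) : ℝ[X]) =
      (∏ i ∈ s, (X - C (lam i))) * X ^ (d - r) := by
    rw [← Finset.prod_filter_mul_prod_filter_not Finset.univ (fun i : Fin d => (i : ℕ) < r),
      ← hs]
    congr 1
    calc ∏ i ∈ Finset.univ.filter (fun i : Fin d => ¬ (i : ℕ) < r), ((X : ℝ[X]) - C (lam i))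
        = ∏ _i ∈ Finset.univ.filter (fun i : Fin d => ¬ (i : ℕ) < r), (X : ℝ[X]) := by
          apply Finset.prod_congr rfl
          intro i hi
          simp only [Finset.mem_filter, Finset.mem_univ, true_and] at hi
          rw [hzero i (not_lt.mp hi), map_zero, sub_zero]
      _ = X ^ (d - r) := by rw [Finset.prod_const, hcardnot]
  have hcoeff : (((Aᵀ * A).charpoly.coeff (d - r) : ℤ) : ℝ) = ∏ i ∈ s, (-(lam i)) := by
    have h0 : (((Aᵀ * A).charpoly).map (Int.castRingHom ℝ)).coeff (d - r)
        = (((Aᵀ * A).charpoly.coeff (d - r) : ℤ) : ℝ) := by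
      simp [Polynomial.coeff_map]
    rw [← h0, hcp, hsplitprod]
    have h1 := Polynomial.coeff_mul_X_pow (∏ i ∈ s, ((X : ℝ[X]) - C (lam i))) (d - r) 0
    rw [zero_add] at h1
    rw [h1, Polynomial.coeff_zero_eq_eval_zero, Polynomial.eval_prod]
    simp
  have hppos : 0 < ∏ i ∈ s, lam i := Finset.prod_pos (fun i hi => hpos i (by
    rw [hs] at hi; simpa using hi))
  have habs : |(((Aᵀ * A).charpoly.coeff (d - r) : ℤ) : ℝ)| = ∏ i ∈ s, lam i := by
    rw [hcoeff, Finset.abs_prod]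
    exact Finset.prod_congr rfl fun i _ => by rw [abs_neg, abs_of_nonneg (hnonneg i)]
  have hcne : ((Aᵀ * A).charpoly.coeff (d - r) : ℤ) ≠ 0 := by
    intro h
    rw [h] at habs
    simp at habs
    exact (ne_of_gt hppos) habs.symm
  have hprod : 1 ≤ ∏ i ∈ s, lam i := by
    rw [← habs, ← Int.cast_abs]
    exact_mod_cast Int.one_le_abs hcne
  -- split the product bound
  have hfk : (s.filter fun i : Fin d => (i : ℕ) < k)
      = Finset.univ.filter (fun i : Fin d => (i : ℕ) < k) := by
    rw [hs, Finset.filter_filter]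
    ext i
    simp only [Finset.mem_filter, Finset.mem_univ, true_and]
    omega
  have hfk_card : (s.filter fun i : Fin d => (i : ℕ) < k).card = k := by
    rw [hfk]
    rw [show (Finset.univ.filter fun i : Fin d => (i : ℕ) < k) = Finset.Iio ⟨k, hkd⟩ by
      ext i; simp [Fin.lt_def], Fin.card_Iio]
  have hfk2_card : (s.filter fun i : Fin d => ¬ (i : ℕ) < k).card = r - k := by
    have h1 := Finset.card_filter_add_card_filter_not
      (s := s) (p := fun i : Fin d => (i : ℕ) < k)
    rw [hscard, hfk_card] at h1
    omega
  have hlk : 0 < lam ⟨k, hkd⟩ := hpos ⟨k, hkd⟩ hrk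
  have hTpos : 0 < T := lt_of_lt_of_le hlk (hTr _)
  have hsplit : ∏ i ∈ s, lam i ≤ T ^ k * (lam ⟨k, hkd⟩) ^ (r - k) := by
    rw [← Finset.prod_filter_mul_prod_filter_not s (fun i : Fin d => (i : ℕ) < k)]
    apply mul_le_mul
    · calc ∏ i ∈ s.filter fun i : Fin d => (i : ℕ) < k, lam i
          ≤ ∏ _i ∈ s.filter fun i : Fin d => (i : ℕ) < k, T :=
            Finset.prod_le_prod (fun i _ => hnonneg i) (fun i _ => hTr i)
        _ = T ^ k := by rw [Finset.prod_const, hfk_card]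
    · calc ∏ i ∈ s.filter fun i : Fin d => ¬ (i : ℕ) < k, lam i
          ≤ ∏ _i ∈ s.filter fun i : Fin d => ¬ (i : ℕ) < k, lam ⟨k, hkd⟩ := by
            apply Finset.prod_le_prod (fun i _ => hnonneg i)
            intro i hi
            simp only [Finset.mem_filter] at hi
            exact hmono (by simp [Fin.le_def]; omega)
        _ = lam ⟨k, hkd⟩ ^ (r - k) := by rw [Finset.prod_const, hfk2_card]
    · exact Finset.prod_nonneg fun i _ => hnonneg i
    · positivity
  have hchain : 1 ≤ T ^ k * lam ⟨k, hkd⟩ ^ (r - k) := le_trans hprod hsplit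
  have hkey : (T ^ k)⁻¹ ≤ lam ⟨k, hkd⟩ ^ (r - k) := by
    rw [inv_le_iff_one_le_mul₀ (pow_pos hTpos k)]
    linarith [hchain]
  -- final rpow manipulation
  have htR : ((r - k : ℕ) : ℝ) = (r : ℝ) - (k : ℝ) := by
    rw [Nat.cast_sub hrk.le]
  have htne : ((r - k : ℕ) : ℝ) ≠ 0 := by
    rw [htR]
    have : (k : ℝ) < (r : ℝ) := by exact_mod_cast hrk
    linarith
  have hpow : (T ^ (-(k : ℝ) / ((r : ℝ) - (k : ℝ)))) ^ (r - k) = (T ^ k)⁻¹ := by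
    rw [← Real.rpow_natCast (T ^ (-(k : ℝ) / ((r : ℝ) - (k : ℝ)))) (r - k),
      ← Real.rpow_mul hTpos.le]
    have hne2 : (r : ℝ) - (k : ℝ) ≠ 0 := by rw [← htR]; exact htne
    rw [show -(k : ℝ) / ((r : ℝ) - (k : ℝ)) * ((r - k : ℕ) : ℝ) = -(k : ℝ) by
      rw [htR, div_mul_cancel₀ _ hne2]]
    rw [Real.rpow_neg hTpos.le, Real.rpow_natCast]
  have hfinal : (T ^ (-(k : ℝ) / ((r : ℝ) - (k : ℝ)))) ^ (r - k) ≤ lam ⟨k, hkd⟩ ^ (r - k) := by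
    rw [hpow]; exact hkey
  exact le_of_pow_le_pow_left₀ (by omega) hlk.le hfinal
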